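/- A pair (X,Y) is a ⟨U,∅⟩-model of P if and only if (X,Y) is a UE-model of P, i.e., X ⊆ Y, Y ⊨ P, X ⊨ P^Y, and for all X' with X ⊊ X' ⊊ Y, X' ⊭ P^Y. -/
import Mathlib


structure Rule (α : Type*) where
  head : Finset α
  pbody : Finset α
  nbody : Finset α
deriving DecidableEq

abbrev Program (α : Type*) := Finset (Rule α)

variable {α : Type*} [DecidableEq α]

/-- An interpretation `Y` satisfies a rule. -/
def satRule (Y : Finset α) (r : Rule α) : Prop :=
  r.pbody ⊆ Y → r.nbody ∩ Y = ∅ → (r.head ∩ Y).Nonempty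

/-- `Y` is a model of the program `P`. -/
def satProg (Y : Finset α) (P : Program α) : Prop := ∀ r ∈ P, satRule Y r

/-- The Gelfond–Lifschitz reduct `P^Y`. -/
def reduct (P : Program α) (Y : Finset α) : Program α :=
  (P.filter (fun r => r.nbody ∩ Y = ∅)).image (fun r => ⟨r.head, r.pbody, ∅⟩)

/-- `Y` is an answer set of `P`: a minimal model of `P^Y`. -/
def isAS (P : Program α) (Y : Finset α) : Prop :=
  satProg Y (reduct P Y) ∧ ∀ Z, Z ⊂ Y → ¬ satProg Z (reduct P Y)

def heads (P : Program α) : Finset α := P.biUnion Rule.head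
def bodies (P : Program α) : Finset α := P.biUnion (fun r => r.pbody ∪ r.nbody)

/-- A positive program: no default negation. -/
def Positive (P : Program α) : Prop := ∀ r ∈ P, r.nbody = ∅

/-- A unary program: only facts `a ←` and rules `a ← b`. -/
def Unary (P : Program α) : Prop :=
  ∀ r ∈ P, r.nbody = ∅ ∧ r.head.card = 1 ∧ r.pbody.card ≤ 1

/-- Membership in the class `C_⟨H,B⟩`. -/
def inClass (H B : Finset α) (P : Program α) : Prop := heads P ⊆ H ∧ bodies P ⊆ B

/-- `V ⪯_H^B Z`. -/
def preceq (H B V Z : Finset α) : Prop := V ∩ H ⊆ Z ∩ H ∧ Z ∩ B ⊆ V ∩ B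

/-- `V ≺_H^B Z`. -/
def prec (H B V Z : Finset α) : Prop := preceq H B V Z ∧ V ∩ (H ∪ B) ≠ Z ∩ (H ∪ B)

/-- `Y` is an `H`-total model of `P`. -/
def Htotal (H : Finset α) (P : Program α) (Y : Finset α) : Prop :=
  satProg Y P ∧ ∀ Z, Z ⊂ Y → satProg Z (reduct P Y) → Z ∩ H ⊂ Y ∩ H

/-- The containment `P ⊆_⟨H,B⟩ Q`. -/
def containsHB (H B : Finset α) (P Q : Program α) : Prop :=
  ∀ R : Program α, inClass H B R → ∀ Y, isAS (P ∪ R) Y → isAS (Q ∪ R) Y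

/-- The equivalence `P ≡_⟨H,B⟩ Q`. -/
def equivHB (H B : Finset α) (P Q : Program α) : Prop :=
  ∀ R : Program α, inClass H B R → ∀ Y, isAS (P ∪ R) Y ↔ isAS (Q ∪ R) Y

/-- A witness against `P ⊆_⟨H,B⟩ Q`. -/
def Witness (H B : Finset α) (P Q : Program α) (X Y : Finset α) : Prop :=
  X ⊆ Y ∧ Htotal H P Y ∧
    (satProg Y Q → X ⊂ Y ∧ satProg X (reduct Q Y) ∧
      ∀ X', preceq H B X X' → X' ⊂ Y → ¬ satProg X' (reduct P Y))

/-- `(X,Y)` is `⪯_H^B`-maximal for `P`. -/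
def maximalHB (H B : Finset α) (P : Program α) (X Y : Finset α) : Prop :=
  satProg X (reduct P Y) ∧ ∀ X', prec H B X X' → X' ⊂ Y → ¬ satProg X' (reduct P Y)

/-- `(X,Y)` is an `⟨H,B⟩`-model of `P`. -/
def HBmodel (H B : Finset α) (P : Program α) (X Y : Finset α) : Prop :=
  X ⊆ Y ∧ Htotal H P Y ∧
    (X ⊂ Y → ∃ X', X' ⊂ Y ∧ X' ∩ (H ∪ B) = X ∧ maximalHB H B P X' Y)

theorem Uempty_models_are_UE_models [Fintype α] (P : Program α) (X Y : Finset α) :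
    HBmodel (Finset.univ : Finset α) (∅ : Finset α) P X Y ↔
      X ⊆ Y ∧ satProg Y P ∧ satProg X (reduct P Y) ∧
        ∀ X', X ⊂ X' → X' ⊂ Y → ¬ satProg X' (reduct P Y) := by
  have hred : satProg Y P → satProg Y (reduct P Y) := by
    intro h r hr
    simp only [reduct, Finset.mem_image, Finset.mem_filter] at hr
    obtain ⟨s, ⟨hs, hn⟩, rfl⟩ := hr
    intro hp _
    exact h s hs hp hn
  constructor
  · rintro ⟨hXY, ⟨hY, -⟩, hmax⟩
    refine ⟨hXY, hY, ?_, ?_⟩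
    · rcases eq_or_lt_of_le hXY with rfl | hlt
      · exact hred hY
      · obtain ⟨X', hX'Y, hXeq, hsat, -⟩ := hmax hlt
        have : X' = X := by simpa [Finset.inter_univ] using hXeq
        exact this ▸ hsat
    · intro X' h1 h2 hsat'
      have hlt : X ⊂ Y := h1.trans h2
      obtain ⟨X'', hX''Y, hXeq, -, hmin⟩ := hmax hlt
      have : X'' = X := by simpa [Finset.inter_univ] using hXeq
      subst this
      exact hmin X' ⟨⟨by simpa [Finset.inter_univ] using h1.subset, by simp⟩,
        by simpa [Finset.inter_univ] using h1.ne⟩ h2 hsat'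
  · rintro ⟨hXY, hY, hsat, hmin⟩
    refine ⟨hXY, ⟨hY, fun Z hZ _ => by simpa [Finset.inter_univ] using hZ⟩, fun hlt => ?_⟩
    refine ⟨X, hlt, by simp [Finset.inter_univ], hsat, fun X' hp h2 => hmin X' ?_ h2⟩
    rcases hp with ⟨⟨h1, -⟩, hne⟩
    simp only [Finset.inter_univ] at h1
    exact lt_of_le_of_ne h1 (by simpa [Finset.inter_univ] using hne)
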